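/- arXiv:1612.07389 — 2 statements merged into one kernel-verified Lean document; each statement's English description precedes it below -/
import Mathlib

section
/- For a nonnegative measurable function p on Ω × ℝ^N with Ω ⊂ ℝ^N bounded, and μ > ℓ > 0, there is a constant C depending only on N, μ, ℓ such that ‖∫_{ℝ^N} |v|^ℓ p(·,v) dv‖_{L^{(N+μ)/(N+ℓ)}(Ω)} ≤ C ‖p‖_{L^∞(Ω×ℝ^N)}^{(μ-ℓ)/(N+μ)} ‖|v|^μ p‖_{L¹(Ω×ℝ^N)}^{(N+ℓ)/(N+μ)}, provided the involved quantities are finite. -/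
open MeasureTheory

private lemma eq_of_log_eq {x y : ℝ} (hx : 0 < x) (hy : 0 < y)
    (h : Real.log x = Real.log y) : x = y := by
  rw [← Real.exp_log hx, ← Real.exp_log hy, h]

private lemma key_alg (n ℓ μ c m M : ℝ) (hn : 0 ≤ n) (hℓ : 0 < ℓ) (hℓμ : ℓ < μ)
    (_hc : 0 ≤ c) (hm : 0 < m) (hM : 0 < M) :
    M * c * ((m / M) ^ (1 / (n + μ))) ^ (n + ℓ)
      + ((m / M) ^ (1 / (n + μ))) ^ (ℓ - μ) * m
    = (c + 1) * M ^ ((μ - ℓ) / (n + μ)) * m ^ ((n + ℓ) / (n + μ)) := by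
  have hnμ : 0 < n + μ := by linarith
  have hdiv : 0 < m / M := div_pos hm hM
  have hR : 0 < (m / M) ^ (1 / (n + μ)) := Real.rpow_pos_of_pos hdiv _
  have hlogR : Real.log ((m / M) ^ (1 / (n + μ)))
      = (1 / (n + μ)) * (Real.log m - Real.log M) := by
    rw [Real.log_rpow hdiv, Real.log_div hm.ne' hM.ne']
  have h1 : M * ((m / M) ^ (1 / (n + μ))) ^ (n + ℓ)
      = M ^ ((μ - ℓ) / (n + μ)) * m ^ ((n + ℓ) / (n + μ)) := by
    apply eq_of_log_eq (by positivity) (by positivity)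
    rw [Real.log_mul hM.ne' (by positivity), Real.log_mul (by positivity) (by positivity),
      Real.log_rpow hR, Real.log_rpow hM, Real.log_rpow hm, hlogR]
    field_simp
    ring
  have h2 : ((m / M) ^ (1 / (n + μ))) ^ (ℓ - μ) * m
      = M ^ ((μ - ℓ) / (n + μ)) * m ^ ((n + ℓ) / (n + μ)) := by
    apply eq_of_log_eq (by positivity) (by positivity)
    rw [Real.log_mul (by positivity) hm.ne', Real.log_mul (by positivity) (by positivity),
      Real.log_rpow hR, Real.log_rpow hM, Real.log_rpow hm, hlogR]
    field_simp
    ring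
  calc M * c * ((m / M) ^ (1 / (n + μ))) ^ (n + ℓ)
        + ((m / M) ^ (1 / (n + μ))) ^ (ℓ - μ) * m
      = c * (M * ((m / M) ^ (1 / (n + μ))) ^ (n + ℓ))
        + ((m / M) ^ (1 / (n + μ))) ^ (ℓ - μ) * m := by ring
    _ = c * (M ^ ((μ - ℓ) / (n + μ)) * m ^ ((n + ℓ) / (n + μ)))
        + M ^ ((μ - ℓ) / (n + μ)) * m ^ ((n + ℓ) / (n + μ)) := by rw [h1, h2]
    _ = (c + 1) * M ^ ((μ - ℓ) / (n + μ)) * m ^ ((n + ℓ) / (n + μ)) := by ring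

/-- Marginal moment interpolation: there is `C = C(N,μ,ℓ)` such that
`‖∫ |v|^ℓ p dv‖_{L^{(N+μ)/(N+ℓ)}(Ω)} ≤ C ‖p‖_∞^{(μ-ℓ)/(N+μ)} ‖|v|^μ p‖_{L¹}^{(N+ℓ)/(N+μ)}`. -/
theorem stmt1 (N : ℕ) (ℓ μ : ℝ) (hℓ : 0 < ℓ) (hℓμ : ℓ < μ) :
    ∃ C : ℝ, 0 < C ∧
      ∀ (Ω : Set (EuclideanSpace ℝ (Fin N))), Bornology.IsBounded Ω → MeasurableSet Ω →
      ∀ (p : EuclideanSpace ℝ (Fin N) → EuclideanSpace ℝ (Fin N) → ℝ),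
        Measurable (fun z : EuclideanSpace ℝ (Fin N) × EuclideanSpace ℝ (Fin N) => p z.1 z.2) →
        (∀ x v, 0 ≤ p x v) →
      ∀ M : ℝ, (∀ x v, p x v ≤ M) →
        (∀ x ∈ Ω, Integrable (fun v => ‖v‖ ^ μ * p x v)) →
        IntegrableOn (fun x => ∫ v, ‖v‖ ^ μ * p x v) Ω →
        IntegrableOn (fun x => (∫ v, ‖v‖ ^ ℓ * p x v) ^ (((N : ℝ) + μ) / ((N : ℝ) + ℓ))) Ω →
        (∫ x in Ω, (∫ v, ‖v‖ ^ ℓ * p x v) ^ (((N : ℝ) + μ) / ((N : ℝ) + ℓ))) ^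
            (((N : ℝ) + ℓ) / ((N : ℝ) + μ))
          ≤ C * M ^ ((μ - ℓ) / ((N : ℝ) + μ)) *
              (∫ x in Ω, ∫ v, ‖v‖ ^ μ * p x v) ^ (((N : ℝ) + ℓ) / ((N : ℝ) + μ)) := by
  classical
  set E := EuclideanSpace ℝ (Fin N) with hE
  set c : ℝ := (volume (Metric.ball (0 : E) 1)).toReal with hcdef
  have hc0 : 0 ≤ c := ENNReal.toReal_nonneg
  have hnn : (0:ℝ) ≤ (N : ℝ) := Nat.cast_nonneg N
  have hnμ : (0:ℝ) < (N : ℝ) + μ := by linarith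
  have hnℓ : (0:ℝ) < (N : ℝ) + ℓ := by linarith
  set α : ℝ := ((N : ℝ) + ℓ) / ((N : ℝ) + μ) with hα
  set β : ℝ := (μ - ℓ) / ((N : ℝ) + μ) with hβ
  set q : ℝ := ((N : ℝ) + μ) / ((N : ℝ) + ℓ) with hq
  have hαpos : 0 < α := div_pos hnℓ hnμ
  have hqpos : 0 < q := div_pos hnμ hnℓ
  have hαq : α * q = 1 := by rw [hα, hq]; field_simp
  refine ⟨c + 1, by linarith, ?_⟩
  intro Ω hΩb hΩm p hpmeas hp0 M hpM hIμ hIΩμ hIΩℓ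
  have hM0 : 0 ≤ M := le_trans (hp0 0 0) (hpM 0 0)
  -- notation
  set m : E → ℝ := fun x => ∫ v, ‖v‖ ^ μ * p x v with hmdef
  set f : E → ℝ := fun x => ∫ v, ‖v‖ ^ ℓ * p x v with hfdef
  have hm0 : ∀ x, 0 ≤ m x := fun x =>
    integral_nonneg fun v => mul_nonneg (Real.rpow_nonneg (norm_nonneg v) μ) (hp0 x v)
  have hf0 : ∀ x, 0 ≤ f x := fun x =>
    integral_nonneg fun v => mul_nonneg (Real.rpow_nonneg (norm_nonneg v) ℓ) (hp0 x v)
  have hI0 : 0 ≤ ∫ x in Ω, m x := setIntegral_nonneg hΩm fun x _ => hm0 x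
  show (∫ x in Ω, f x ^ q) ^ α ≤ (c + 1) * M ^ β * (∫ x in Ω, m x) ^ α
  rcases hM0.eq_or_lt with hM | hM
  · -- M = 0 : p vanishes identically
    have hp : ∀ x v, p x v = 0 := fun x v => le_antisymm (hM ▸ hpM x v) (hp0 x v)
    have hfz : ∀ x, f x = 0 := by
      intro x; simp only [hfdef, hp, mul_zero, integral_zero]
    have hmz : ∀ x, m x = 0 := by
      intro x; simp only [hmdef, hp, mul_zero, integral_zero]
    have hL : (∫ x in Ω, f x ^ q) = 0 := by
      simp [hfz, Real.zero_rpow hqpos.ne']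
    have hR : (∫ x in Ω, m x) = 0 := by simp [hmz]
    rw [hL, hR, Real.zero_rpow hαpos.ne', ← hM, Real.zero_rpow (div_pos (by linarith) hnμ).ne']
    simp
  · -- main case : M > 0
    set K : ℝ := (c + 1) * M ^ β with hK
    have hK0 : 0 ≤ K := mul_nonneg (by linarith) (Real.rpow_nonneg hM0 _)
    have hkey : ∀ x ∈ Ω, f x ≤ K * m x ^ α := by
      intro x hx
      have hμint := hIμ x hx
      rcases (hm0 x).eq_or_lt with hmx | hmx
      · -- m x = 0 : integrand vanishes a.e.
        have hae : (fun v => ‖v‖ ^ μ * p x v) =ᵐ[volume] 0 :=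
          (integral_eq_zero_iff_of_nonneg
            (fun v => mul_nonneg (Real.rpow_nonneg (norm_nonneg v) μ) (hp0 x v)) hμint).mp
            hmx.symm
        have hae' : (fun v : E => ‖v‖ ^ ℓ * p x v) =ᵐ[volume] 0 := by
          filter_upwards [hae] with v hv
          rcases mul_eq_zero.mp hv with h | h
          · have : ‖v‖ = 0 := by
              by_contra hne
              exact hne (by
                have := Real.rpow_eq_zero_iff_of_nonneg (norm_nonneg v) |>.mp h
                exact this.1)
            simp [this, Real.zero_rpow hℓ.ne']
          · simp [h]
        have : f x = 0 := integral_eq_zero_of_ae hae'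
        rw [this, ← hmx, Real.zero_rpow hαpos.ne', mul_zero]
      · by_cases hfi : Integrable (fun v : E => ‖v‖ ^ ℓ * p x v)
        · set R : ℝ := (m x / M) ^ (1 / ((N : ℝ) + μ)) with hRdef
          have hRpos : 0 < R := Real.rpow_pos_of_pos (div_pos hmx hM) _
          have hsplit : f x = (∫ v in Metric.ball (0 : E) R, ‖v‖ ^ ℓ * p x v)
              + ∫ v in (Metric.ball (0 : E) R)ᶜ, ‖v‖ ^ ℓ * p x v :=
            (integral_add_compl measurableSet_ball hfi).symm
          have hb1 : (∫ v in Metric.ball (0 : E) R, ‖v‖ ^ ℓ * p x v)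
              ≤ M * c * R ^ ((N : ℝ) + ℓ) := by
            have hmono : (∫ v in Metric.ball (0 : E) R, ‖v‖ ^ ℓ * p x v)
                ≤ ∫ _ in Metric.ball (0 : E) R, R ^ ℓ * M := by
              refine setIntegral_mono_on hfi.integrableOn
                (integrableOn_const measure_ball_lt_top.ne) measurableSet_ball ?_
              intro v hv
              have hvR : ‖v‖ ≤ R := le_of_lt (mem_ball_zero_iff.mp hv)
              exact mul_le_mul (Real.rpow_le_rpow (norm_nonneg v) hvR hℓ.le) (hpM x v)
                (hp0 x v) (Real.rpow_nonneg hRpos.le ℓ)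
            have hvol : (volume (Metric.ball (0 : E) R)).toReal = R ^ (N : ℕ) * c := by
              rw [Measure.addHaar_ball_of_pos volume _ hRpos, finrank_euclideanSpace_fin,
                ENNReal.toReal_mul, ENNReal.toReal_ofReal (by positivity)]
            have hconst : (∫ _ in Metric.ball (0 : E) R, R ^ ℓ * M)
                = R ^ (N : ℕ) * c * (R ^ ℓ * M) := by
              rw [setIntegral_const, smul_eq_mul, measureReal_def, hvol]
            have : R ^ (N : ℕ) * c * (R ^ ℓ * M) = M * c * R ^ ((N : ℝ) + ℓ) := by
              rw [Real.rpow_add hRpos, ← Real.rpow_natCast R N]; ring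
            calc (∫ v in Metric.ball (0 : E) R, ‖v‖ ^ ℓ * p x v)
                ≤ ∫ _ in Metric.ball (0 : E) R, R ^ ℓ * M := hmono
              _ = M * c * R ^ ((N : ℝ) + ℓ) := by rw [hconst, this]
          have hb2 : (∫ v in (Metric.ball (0 : E) R)ᶜ, ‖v‖ ^ ℓ * p x v)
              ≤ R ^ (ℓ - μ) * m x := by
            have hmono : (∫ v in (Metric.ball (0 : E) R)ᶜ, ‖v‖ ^ ℓ * p x v)
                ≤ ∫ v in (Metric.ball (0 : E) R)ᶜ, R ^ (ℓ - μ) * (‖v‖ ^ μ * p x v) := by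
              refine setIntegral_mono_on hfi.integrableOn
                ((hμint.const_mul _).integrableOn) measurableSet_ball.compl ?_
              intro v hv
              have hvR : R ≤ ‖v‖ := by
                have := Set.notMem_of_mem_compl hv
                simpa [mem_ball_zero_iff, not_lt] using this
              have hvpos : 0 < ‖v‖ := lt_of_lt_of_le hRpos hvR
              have h1 : ‖v‖ ^ ℓ = ‖v‖ ^ (ℓ - μ) * ‖v‖ ^ μ := by
                rw [← Real.rpow_add hvpos]; ring_nf
              have h2 : ‖v‖ ^ (ℓ - μ) ≤ R ^ (ℓ - μ) :=
                Real.rpow_le_rpow_of_nonpos hRpos hvR (by linarith)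
              calc ‖v‖ ^ ℓ * p x v = ‖v‖ ^ (ℓ - μ) * (‖v‖ ^ μ * p x v) := by rw [h1]; ring
                _ ≤ R ^ (ℓ - μ) * (‖v‖ ^ μ * p x v) :=
                    mul_le_mul_of_nonneg_right h2
                      (mul_nonneg (Real.rpow_nonneg (norm_nonneg v) μ) (hp0 x v))
            have hrest : (∫ v in (Metric.ball (0 : E) R)ᶜ, R ^ (ℓ - μ) * (‖v‖ ^ μ * p x v))
                ≤ R ^ (ℓ - μ) * m x := by
              rw [integral_const_mul _ _]
              refine mul_le_mul_of_nonneg_left ?_ (Real.rpow_nonneg hRpos.le _)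
              exact setIntegral_le_integral hμint (Filter.Eventually.of_forall fun v =>
                mul_nonneg (Real.rpow_nonneg (norm_nonneg v) μ) (hp0 x v))
            exact le_trans hmono hrest
          calc f x ≤ M * c * R ^ ((N : ℝ) + ℓ) + R ^ (ℓ - μ) * m x := by
                rw [hsplit]; exact add_le_add hb1 hb2
            _ = (c + 1) * M ^ β * m x ^ α :=
                key_alg (N : ℝ) ℓ μ c (m x) M hnn hℓ hℓμ hc0 hmx hM
            _ = K * m x ^ α := by rw [hK]
        · have hfx : f x = 0 := integral_undef hfi
          rw [hfx]
          exact mul_nonneg hK0 (Real.rpow_nonneg (hm0 x) _)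
    -- raise to the power q and integrate
    have hkey2 : ∀ x ∈ Ω, f x ^ q ≤ K ^ q * m x := by
      intro x hx
      have h := Real.rpow_le_rpow (hf0 x) (hkey x hx) hqpos.le
      calc f x ^ q ≤ (K * m x ^ α) ^ q := h
        _ = K ^ q * (m x ^ α) ^ q :=
            Real.mul_rpow hK0 (Real.rpow_nonneg (hm0 x) _)
        _ = K ^ q * m x := by
            rw [← Real.rpow_mul (hm0 x), hαq, Real.rpow_one]
    have hint : (∫ x in Ω, f x ^ q) ≤ K ^ q * ∫ x in Ω, m x := by
      rw [← integral_const_mul _ _]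
      exact setIntegral_mono_on hIΩℓ (hIΩμ.const_mul _) hΩm hkey2
    have hLnn : 0 ≤ ∫ x in Ω, f x ^ q :=
      setIntegral_nonneg hΩm fun x _ => Real.rpow_nonneg (hf0 x) q
    calc (∫ x in Ω, f x ^ q) ^ α
        ≤ (K ^ q * ∫ x in Ω, m x) ^ α := Real.rpow_le_rpow hLnn hint hαpos.le
      _ = (K ^ q) ^ α * (∫ x in Ω, m x) ^ α :=
          Real.mul_rpow (Real.rpow_nonneg hK0 q) hI0
      _ = K * (∫ x in Ω, m x) ^ α := by
          rw [← Real.rpow_mul hK0, mul_comm q α, hαq, Real.rpow_one]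
      _ = (c + 1) * M ^ β * (∫ x in Ω, m x) ^ α := by rw [hK]
end

section
/- For a nonnegative measurable function p on Ω × ℝ^N and μ > N, there exists a constant C_μ depending only on μ and N such that the marginal density satisfies ‖∫_{ℝ^N} p(·,v) dv‖_{L^∞(Ω)} ≤ C_μ ‖p‖_{L^∞(Ω×ℝ^N)}^{1-N/μ} ‖(1+|v|²)^{μ/2} p‖_{L^∞(Ω×ℝ^N)}^{N/μ}. -/
open MeasureTheory Set

private lemma min_le_rpow_mul {a b s : ℝ} (ha : 0 ≤ a) (hb : 0 ≤ b) (hs0 : 0 ≤ s)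
    (hs1 : s ≤ 1) : min a b ≤ a ^ (1 - s) * b ^ s := by
  rcases (le_min ha hb).eq_or_lt with h | h
  · rw [← h]
    positivity
  · calc min a b = min a b ^ (1 - s) * min a b ^ s := by
          rw [← Real.rpow_add h, sub_add_cancel, Real.rpow_one]
    _ ≤ a ^ (1 - s) * b ^ s :=
        mul_le_mul (Real.rpow_le_rpow (le_min ha hb) (min_le_left _ _) (by linarith))
          (Real.rpow_le_rpow (le_min ha hb) (min_le_right _ _) hs0)
          (Real.rpow_nonneg (le_min ha hb) _) (Real.rpow_nonneg ha _)

private lemma oneD {n : ℕ} (hn : 1 ≤ n) {μ M W R : ℝ} (hμ : (n : ℝ) < μ) (hM : 0 ≤ M)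
    (hW : 0 ≤ W) (hR : 0 < R) :
    ∫ y in Set.Ioi (0 : ℝ), y ^ (n - 1) * min M (W * (1 + y ^ 2) ^ (-(μ / 2))) ≤
      M * R ^ n / (n : ℝ) + W * R ^ ((n : ℝ) - μ) / (μ - (n : ℝ)) := by
  have hμ0 : 0 < μ := lt_of_le_of_lt (Nat.cast_nonneg n) hμ
  set f : ℝ → ℝ := fun y => min M (W * (1 + y ^ 2) ^ (-(μ / 2))) with hf
  have hfc : Continuous f := continuous_const.min (continuous_const.mul
    ((continuous_const.add (continuous_pow 2)).rpow_const fun y => Or.inl (by positivity : (1:ℝ) + y ^ 2 ≠ 0)))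
  have hf0 : ∀ y, 0 ≤ f y := fun y => le_min hM (by positivity)
  have hfM : ∀ y, f y ≤ M := fun y => min_le_left _ _
  have hcont : Continuous fun y => y ^ (n - 1) * f y := (continuous_pow _).mul hfc
  have htail : ∀ y ∈ Set.Ioi R, y ^ (n - 1) * f y ≤ W * y ^ ((n : ℝ) - 1 - μ) := by
    intro y hy
    have hy0 : 0 < y := hR.trans hy
    have h1 : f y ≤ W * y ^ (-μ) := by
      refine le_trans (min_le_right _ _) ?_
      have h2 : (1 + y ^ 2) ^ (-(μ / 2)) ≤ (y ^ 2) ^ (-(μ / 2)) :=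
        Real.rpow_le_rpow_of_nonpos (by positivity) (by nlinarith) (by linarith)
      calc W * (1 + y ^ 2) ^ (-(μ / 2)) ≤ W * (y ^ 2) ^ (-(μ / 2)) :=
            mul_le_mul_of_nonneg_left h2 hW
        _ = W * y ^ (-μ) := by
            rw [← Real.rpow_natCast y 2, ← Real.rpow_mul hy0.le,
              show ((2:ℕ):ℝ) * -(μ / 2) = -μ by push_cast; ring]
    calc y ^ (n - 1) * f y ≤ y ^ (n - 1) * (W * y ^ (-μ)) :=
          mul_le_mul_of_nonneg_left h1 (by positivity)
      _ = W * y ^ ((n : ℝ) - 1 - μ) := by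
          rw [← Real.rpow_natCast y (n - 1), mul_left_comm, ← Real.rpow_add hy0]
          congr 1
          rw [Nat.cast_sub hn]
          push_cast
          ring
  have hi1 : IntegrableOn (fun y => y ^ (n - 1) * f y) (Set.Ioc 0 R) :=
    hcont.integrableOn_Ioc
  have hiW : IntegrableOn (fun y => W * y ^ ((n : ℝ) - 1 - μ)) (Set.Ioi R) :=
    (integrableOn_Ioi_rpow_of_lt (by linarith) hR).const_mul W
  have hi2 : IntegrableOn (fun y => y ^ (n - 1) * f y) (Set.Ioi R) := by
    refine hiW.mono' hcont.aestronglyMeasurable ?_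
    filter_upwards [ae_restrict_mem measurableSet_Ioi] with y hy
    have hy0 : 0 < y := hR.trans hy
    rw [Real.norm_of_nonneg (mul_nonneg (pow_nonneg hy0.le _) (hf0 y))]
    exact htail y hy
  have hiM : IntegrableOn (fun y => y ^ (n - 1) * M) (Set.Ioc 0 R) :=
    ((continuous_pow _).mul continuous_const).integrableOn_Ioc
  rw [← Set.Ioc_union_Ioi_eq_Ioi hR.le,
    setIntegral_union (Set.Ioc_disjoint_Ioi le_rfl) measurableSet_Ioi hi1 hi2]
  have e1 : ∫ y in Set.Ioc 0 R, y ^ (n - 1) * f y ≤ M * R ^ n / (n : ℝ) := by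
    calc ∫ y in Set.Ioc 0 R, y ^ (n - 1) * f y ≤ ∫ y in Set.Ioc 0 R, y ^ (n - 1) * M :=
          setIntegral_mono_on hi1 hiM measurableSet_Ioc
            (fun y hy => mul_le_mul_of_nonneg_left (hfM y) (pow_nonneg hy.1.le _))
      _ = M * R ^ n / (n : ℝ) := by
          rw [← intervalIntegral.integral_of_le hR.le, intervalIntegral.integral_mul_const,
            integral_pow]
          have hnn : n - 1 + 1 = n := Nat.succ_pred_eq_of_pos hn
          have hc : ((n - 1 : ℕ) : ℝ) + 1 = (n : ℝ) := by
            rw [Nat.cast_sub hn]; push_cast; ring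
          rw [hnn, hc, zero_pow (by omega)]
          ring
  have e2 : ∫ y in Set.Ioi R, y ^ (n - 1) * f y ≤ W * R ^ ((n : ℝ) - μ) / (μ - (n : ℝ)) := by
    calc ∫ y in Set.Ioi R, y ^ (n - 1) * f y ≤ ∫ y in Set.Ioi R, W * y ^ ((n : ℝ) - 1 - μ) :=
          setIntegral_mono_on hi2 hiW measurableSet_Ioi htail
      _ = W * R ^ ((n : ℝ) - μ) / (μ - (n : ℝ)) := by
          rw [integral_const_mul, integral_Ioi_rpow_of_lt (by linarith) hR]
          have h3 : (n : ℝ) - 1 - μ + 1 = (n : ℝ) - μ := by ring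
          rw [h3]
          have h4 : (n : ℝ) - μ ≠ 0 := by intro h; linarith [sub_eq_zero.mp h]
          have h5 : μ - (n : ℝ) ≠ 0 := by intro h; linarith [sub_eq_zero.mp h]
          field_simp
          ring
  linarith

/-- L^∞ bound of the marginal density:
`‖∫ p dv‖_{L^∞(Ω)} ≤ C_μ ‖p‖_∞^{1-N/μ} ‖(1+|v|²)^{μ/2} p‖_∞^{N/μ}` for `μ > N`. -/
theorem stmt2 (N : ℕ) (μ : ℝ) (hμ : (N : ℝ) < μ) :
    ∃ C : ℝ, 0 < C ∧
      ∀ (Ω : Set (EuclideanSpace ℝ (Fin N))), MeasurableSet Ω →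
      ∀ (p : EuclideanSpace ℝ (Fin N) → EuclideanSpace ℝ (Fin N) → ℝ),
        Measurable (fun z : EuclideanSpace ℝ (Fin N) × EuclideanSpace ℝ (Fin N) => p z.1 z.2) →
        (∀ x v, 0 ≤ p x v) →
      ∀ M W : ℝ, 0 ≤ M → 0 ≤ W →
        (∀ x v, p x v ≤ M) →
        (∀ x v, (1 + ‖v‖ ^ 2) ^ (μ / 2) * p x v ≤ W) →
        ∀ x ∈ Ω, (∫ v, p x v) ≤ C * M ^ (1 - (N : ℝ) / μ) * W ^ ((N : ℝ) / μ) := by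
  have hμ0 : 0 < μ := lt_of_le_of_lt (Nat.cast_nonneg N) hμ
  rcases Nat.eq_zero_or_pos N with hN | hN
  · -- dimension zero
    subst hN
    haveI : Subsingleton (EuclideanSpace ℝ (Fin 0)) := ⟨fun a b => by ext i; exact i.elim0⟩
    haveI : Unique (EuclideanSpace ℝ (Fin 0)) := ⟨⟨0⟩, fun a => Subsingleton.elim a 0⟩
    refine ⟨(volume (univ : Set (EuclideanSpace ℝ (Fin 0)))).toReal + 1, by positivity, ?_⟩
    intro Ω hΩ p hp hp0 M W hM hW hpM hpW x hx
    have h0 : ((0 : ℕ) : ℝ) / μ = 0 := by simp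
    rw [h0, sub_zero, Real.rpow_zero, Real.rpow_one, integral_unique, smul_eq_mul]
    have h3 : 0 ≤ (volume (univ : Set (EuclideanSpace ℝ (Fin 0)))).toReal := ENNReal.toReal_nonneg
    refine le_trans (mul_le_mul_of_nonneg_left (hpM x _) h3) ?_
    rw [measureReal_def]
    nlinarith [hM, h3]
  · -- dimension at least one
    have hNμ : 0 < μ - (N : ℝ) := by linarith
    set E := EuclideanSpace ℝ (Fin N)
    haveI : Nonempty (Fin N) := ⟨⟨0, hN⟩⟩
    haveI : Nontrivial (Fin N → ℝ) := inferInstance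
    haveI : Nontrivial E := inferInstanceAs (Nontrivial (WithLp 2 (∀ _ : Fin N, ℝ)))
    set B := (volume (Metric.ball (0 : E) 1)).toReal with hBdef
    have hB : 0 < B :=
      ENNReal.toReal_pos (Metric.measure_ball_pos _ _ one_pos).ne' measure_ball_lt_top.ne
    refine ⟨(N : ℝ) * B * (1 / (N : ℝ) + 1 / (μ - (N : ℝ))), ?_, ?_⟩
    · have hN0 : (0 : ℝ) < (N : ℝ) := by exact_mod_cast hN
      positivity
    intro Ω hΩ p hp hp0 M W hM hW hpM hpW x hx
    set θ := (N : ℝ) / μ with hθ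
    -- pointwise domination
    have hb : ∀ v : E, p x v ≤ min M (W * (1 + ‖v‖ ^ 2) ^ (-(μ / 2))) := by
      intro v
      refine le_min (hpM x v) ?_
      have hg : (0 : ℝ) < (1 + ‖v‖ ^ 2) ^ (μ / 2) := Real.rpow_pos_of_pos (by positivity) _
      rw [Real.rpow_neg (by positivity), ← div_eq_mul_inv]
      rw [le_div_iff₀ hg]
      calc p x v * (1 + ‖v‖ ^ 2) ^ (μ / 2) = (1 + ‖v‖ ^ 2) ^ (μ / 2) * p x v := by ring
        _ ≤ W := hpW x v
    rcases eq_or_lt_of_le hM with hM0 | hM0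
    · -- M = 0 : p ≡ 0
      have hz : ∀ v : E, p x v = 0 := fun v => le_antisymm (by rw [hM0]; exact hpM x v) (hp0 x v)
      rw [show (fun v : E => p x v) = fun _ => (0 : ℝ) from funext hz]
      rw [integral_zero]
      positivity
    rcases eq_or_lt_of_le hW with hW0 | hW0
    · -- W = 0 : p ≡ 0
      have hz : ∀ v : E, p x v = 0 := by
        intro v
        have h1 := hb v
        have h2 := hp0 x v
        rw [← hW0, zero_mul] at h1
        have := min_le_right M (0:ℝ)
        nlinarith [le_trans h1 (min_le_right M (0:ℝ))]
      rw [show (fun v : E => p x v) = fun _ => (0 : ℝ) from funext hz]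
      rw [integral_zero]
      positivity
    -- now M > 0 and W > 0
    set R : ℝ := (W / M) ^ (1 / μ) with hRdef
    have hR : 0 < R := Real.rpow_pos_of_pos (div_pos hW0 hM0) _
    set f : ℝ → ℝ := fun y => min M (W * (1 + y ^ 2) ^ (-(μ / 2))) with hfdef
    have hfc : Continuous f := continuous_const.min (continuous_const.mul
      ((continuous_const.add (continuous_pow 2)).rpow_const fun y => Or.inl (by positivity : (1:ℝ) + y ^ 2 ≠ 0)))
    have hf0 : ∀ y, 0 ≤ f y := fun y => le_min hM (by positivity)
    -- integrability of the radial majorant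
    set s : ℝ := ((N : ℝ) + μ) / (2 * μ) with hsdef
    have hs0 : 0 < s := by positivity
    have hs1 : s < 1 := by
      rw [hsdef, div_lt_one (by positivity)]
      linarith
    have hfin : (Module.finrank ℝ E : ℝ) < ((N : ℝ) + μ) / 2 := by
      rw [show Module.finrank ℝ E = N from finrank_euclideanSpace_fin]
      linarith
    have hint_f : Integrable (fun v : E => f ‖v‖) := by
      refine ((integrable_rpow_neg_one_add_norm_sq (μ := (volume : Measure E)) hfin).const_mul
        (M ^ (1 - s) * W ^ s)).mono' (hfc.comp continuous_norm).aestronglyMeasurable ?_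
      refine ae_of_all _ fun v => ?_
      rw [Real.norm_of_nonneg (hf0 _)]
      have key : f ‖v‖ ≤ M ^ (1 - s) * (W * (1 + ‖v‖ ^ 2) ^ (-(μ / 2))) ^ s :=
        min_le_rpow_mul hM (by positivity) hs0.le hs1.le
      refine key.trans (le_of_eq ?_)
      rw [Real.mul_rpow hW (Real.rpow_nonneg (by positivity) _),
        ← Real.rpow_mul (by positivity : (0:ℝ) ≤ 1 + ‖v‖ ^ 2)]
      have hexp : -(μ / 2) * s = -(((N : ℝ) + μ) / 2) / 2 := by
        rw [hsdef]
        field_simp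
      rw [hexp]
      ring
    -- integrability of the section
    have hpxm : Measurable fun v : E => p x v := hp.comp measurable_prodMk_left
    have hint_p : Integrable (fun v : E => p x v) := by
      refine hint_f.mono' hpxm.aestronglyMeasurable (ae_of_all _ fun v => ?_)
      rw [Real.norm_of_nonneg (hp0 x v)]
      exact hb v
    -- main chain
    have hfθ1 : M * R ^ N = M ^ (1 - θ) * W ^ θ := by
      have hRN : R ^ N = (W / M) ^ θ := by
        rw [hRdef, ← Real.rpow_natCast ((W / M) ^ (1 / μ)) N,
          ← Real.rpow_mul (div_pos hW0 hM0).le, hθ]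
        congr 1
        field_simp
      rw [hRN, Real.div_rpow hW (by positivity), Real.rpow_sub hM0, Real.rpow_one]
      ring
    have hfθ2 : W * R ^ ((N : ℝ) - μ) = M ^ (1 - θ) * W ^ θ := by
      have hRNμ : R ^ ((N : ℝ) - μ) = (W / M) ^ (θ - 1) := by
        rw [hRdef, ← Real.rpow_mul (div_pos hW0 hM0).le, hθ]
        congr 1
        field_simp
      have hMne : M ≠ 0 := hM0.ne'
      have hWne : W ≠ 0 := hW0.ne'
      have hMt : M ^ θ ≠ 0 := (Real.rpow_pos_of_pos hM0 θ).ne'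
      rw [hRNμ, Real.div_rpow hW (by positivity),
        show (W:ℝ) ^ (θ - 1) = W ^ θ / W by rw [Real.rpow_sub hW0, Real.rpow_one],
        show (M:ℝ) ^ (θ - 1) = M ^ θ / M by rw [Real.rpow_sub hM0, Real.rpow_one],
        show (M:ℝ) ^ (1 - θ) = M / M ^ θ by rw [Real.rpow_sub hM0, Real.rpow_one]]
      field_simp
    calc ∫ v : E, p x v ≤ ∫ v : E, f ‖v‖ := integral_mono hint_p hint_f hb
      _ = (N : ℝ) * (B * ∫ y in Set.Ioi (0:ℝ), y ^ (N - 1) * f y) := by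
          rw [integral_fun_norm_addHaar (volume : Measure E) f,
            show Module.finrank ℝ E = N from finrank_euclideanSpace_fin]
          simp only [smul_eq_mul, nsmul_eq_mul]
          rfl
      _ ≤ (N : ℝ) * (B * (M * R ^ N / (N : ℝ) + W * R ^ ((N : ℝ) - μ) / (μ - (N : ℝ)))) := by
          have := oneD hN hμ hM hW hR
          have hNB : (0:ℝ) ≤ (N : ℝ) * B := by positivity
          have := mul_le_mul_of_nonneg_left
            (mul_le_mul_of_nonneg_left this hB.le) (Nat.cast_nonneg N : (0:ℝ) ≤ N)
          exact this
      _ = (N : ℝ) * B * (1 / (N : ℝ) + 1 / (μ - (N : ℝ))) * M ^ (1 - θ) * W ^ θ := by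
          rw [hfθ1, hfθ2]
          ring
end
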